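/- Consider the iteration: given a feasible point Z⁽ᵏ⁾ in a nonempty convex feasible set, choose (L⁽ᵏ⁾, R⁽ᵏ⁾) from the top-2n left and right singular vectors of Z⁽ᵏ⁾, then let Z⁽ᵏ⁺¹⁾ minimize φ(Z) = ‖Z‖_∗ − tr(L⁽ᵏ⁾ Z (R⁽ᵏ⁾)ᵀ) over the feasible set. Then the sequence α_k := ‖Z⁽ᵏ⁾‖_{∗,2n} (truncated nuclear norm) is monotonically non-increasing. -/

import Mathlib

open Matrix

lemma dotProduct_sum' {I J : Type*} [Fintype I] (s : Finset J) (v : I → ℝ) (w : J → I → ℝ) :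
    v ⬝ᵥ (∑ j ∈ s, w j) = ∑ j ∈ s, v ⬝ᵥ w j := by
  simp only [dotProduct, Finset.sum_apply, Finset.mul_sum]
  exact Finset.sum_comm

lemma dp_self_nonneg {I : Type*} [Fintype I] (v : I → ℝ) : 0 ≤ v ⬝ᵥ v :=
  Finset.sum_nonneg fun i _ => mul_self_nonneg _

lemma trace_eq_sum_quadform {J : Type*} [Fintype J] [DecidableEq J]
    (M : Matrix J J ℝ) (v : J → (J → ℝ))
    (hcomp : ∀ a b, ∑ j, v j a * v j b = (1 : Matrix J J ℝ) a b) :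
    ∑ j, v j ⬝ᵥ (M *ᵥ v j) = M.trace := by
  calc ∑ j, v j ⬝ᵥ (M *ᵥ v j)
      = ∑ j, ∑ a, ∑ b, M a b * (v j a * v j b) := by
        refine Finset.sum_congr rfl fun j _ => ?_
        simp only [dotProduct, mulVec, Finset.mul_sum]
        refine Finset.sum_congr rfl fun a _ => Finset.sum_congr rfl fun b _ => by ring
    _ = ∑ a, ∑ b, M a b * ∑ j, v j a * v j b := by
        rw [Finset.sum_comm]
        refine Finset.sum_congr rfl fun a _ => ?_
        rw [Finset.sum_comm]
        refine Finset.sum_congr rfl fun b _ => ?_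
        rw [Finset.mul_sum]
    _ = ∑ a, ∑ b, M a b * (1 : Matrix J J ℝ) a b := by
        refine Finset.sum_congr rfl fun a _ => Finset.sum_congr rfl fun b _ => by rw [hcomp]
    _ = ∑ a, M a a := by
        refine Finset.sum_congr rfl fun a _ => ?_
        simp [Matrix.one_apply, mul_ite, Finset.sum_ite_eq]
    _ = M.trace := rfl

lemma bessel_aux {I J : Type*} [Fintype I] [Fintype J] [DecidableEq J]
    (w : J → (I → ℝ)) (μ : J → ℝ)
    (horth : ∀ i j, w i ⬝ᵥ w j = if i = j then μ j else 0)
    (a : I → ℝ) :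
    ∑ j, (a ⬝ᵥ w j) ^ 2 / μ j ≤ a ⬝ᵥ a := by
  classical
  have hwzero : ∀ j, μ j = 0 → a ⬝ᵥ w j = 0 := by
    intro j hj
    have h0 : w j ⬝ᵥ w j = 0 := by rw [horth]; simp [hj]
    have : w j = 0 := dotProduct_self_eq_zero.mp h0
    simp [this]
  set c : J → ℝ := fun j => (a ⬝ᵥ w j) / μ j with hc
  set s : I → ℝ := ∑ j, c j • w j with hs
  have haj : ∀ j, c j * (a ⬝ᵥ w j) = (a ⬝ᵥ w j) ^ 2 / μ j := by
    intro j
    by_cases hj : μ j = 0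
    · simp [hc, hj, hwzero j hj]
    · simp only [hc]; rw [div_mul_eq_mul_div, sq]
  have has : a ⬝ᵥ s = ∑ j, (a ⬝ᵥ w j) ^ 2 / μ j := by
    rw [hs, dotProduct_sum']
    refine Finset.sum_congr rfl fun j _ => ?_
    rw [dotProduct_smul, smul_eq_mul, haj]
  have hws : ∀ i, w i ⬝ᵥ s = c i * μ i := by
    intro i
    rw [hs, dotProduct_sum']
    have : ∀ j, w i ⬝ᵥ (c j • w j) = if i = j then c j * μ j else 0 := by
      intro j
      rw [dotProduct_smul, smul_eq_mul, horth, mul_ite, mul_zero]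
    simp_rw [this]
    simp
  have hss : s ⬝ᵥ s = ∑ j, (a ⬝ᵥ w j) ^ 2 / μ j := by
    have hcj : ∀ j, c j * (c j * μ j) = (a ⬝ᵥ w j) ^ 2 / μ j := by
      intro j
      by_cases hj : μ j = 0
      · simp [hc, hj]
      · simp only [hc]; rw [div_mul_cancel₀ _ hj, div_mul_eq_mul_div, sq]
    calc s ⬝ᵥ s = ∑ j, s ⬝ᵥ (c j • w j) := by rw [hs, dotProduct_sum']
      _ = ∑ j, c j * (c j * μ j) := by
          refine Finset.sum_congr rfl fun j _ => ?_
          rw [dotProduct_smul, smul_eq_mul, dotProduct_comm, hws]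
      _ = ∑ j, (a ⬝ᵥ w j) ^ 2 / μ j := Finset.sum_congr rfl fun j _ => hcj j
  have hdd : 0 ≤ (a - s) ⬝ᵥ (a - s) := dp_self_nonneg _
  rw [sub_dotProduct, dotProduct_sub, dotProduct_sub, dotProduct_comm s a, has, hss] at hdd
  linarith

lemma sum_mul_le_sorted_prefix {N m : ℕ} (hm : m < N) (f c : Fin N → ℝ)
    (hf0 : ∀ p, 0 ≤ f p) (hc0 : ∀ p, 0 ≤ c p) (hc1 : ∀ p, c p ≤ 1)
    (hcs : ∑ p, c p ≤ (m : ℝ)) :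
    ∑ p, f p * c p ≤ ∑ i ∈ Finset.range m,
      (if h : i < N then f (Tuple.sort f (Fin.rev ⟨i, h⟩)) else 0) := by
  classical
  set e : Fin N ≃ Fin N := Fin.revPerm.trans (Tuple.sort f) with he
  have heapp : ∀ p, e p = Tuple.sort f (Fin.rev p) := fun p => rfl
  set F : Fin N → ℝ := fun p => f (e p) with hF
  set C : Fin N → ℝ := fun p => c (e p) with hC
  have hanti : ∀ p q : Fin N, p ≤ q → F q ≤ F p := by
    intro p q h
    have := Tuple.monotone_sort f (show Fin.rev q ≤ Fin.rev p from Fin.rev_le_rev.mpr h)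
    simpa [hF, heapp] using this
  set τ : ℝ := F ⟨m, hm⟩ with hτ
  set G : ℕ → ℝ := fun i => if h : i < N then f (Tuple.sort f (Fin.rev ⟨i, h⟩)) else 0 with hG
  have hFG : ∀ p : Fin N, F p = G p.val := by
    intro p
    simp [hF, hG, heapp, p.isLt]
  have hfilter : (Finset.range N).filter (· < m) = Finset.range m := by
    ext i; simp [Finset.mem_filter, Finset.mem_range]; omega
  have hRHS : ∑ i ∈ Finset.range m, G i = ∑ p : Fin N, (if (p : ℕ) < m then F p else 0) := by
    have h1 : ∑ p : Fin N, (if (p : ℕ) < m then F p else 0)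
        = ∑ p : Fin N, (fun i : ℕ => if i < m then G i else 0) (p : ℕ) := by
      refine Finset.sum_congr rfl fun p _ => ?_
      simp only [hFG]
    rw [h1, Fin.sum_univ_eq_sum_range (fun i : ℕ => if i < m then G i else 0) N,
      ← Finset.sum_filter, hfilter]
  have hτ0 : 0 ≤ τ := hf0 _
  have hcard : ∑ p : Fin N, (if (p : ℕ) < m then (1 : ℝ) else 0) = (m : ℝ) := by
    rw [Fin.sum_univ_eq_sum_range (fun i : ℕ => if i < m then (1 : ℝ) else 0) N,
      ← Finset.sum_filter, hfilter]
    simp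
  have hCs : ∑ p, C p ≤ (m : ℝ) := by
    rw [hC, Equiv.sum_comp e c]; exact hcs
  have hL : ∑ p, f p * c p = ∑ p, F p * C p :=
    (Equiv.sum_comp e (fun p => f p * c p)).symm
  have key : ∀ p : Fin N, F p * C p ≤
      (if (p : ℕ) < m then F p else 0) + τ * (C p - if (p : ℕ) < m then 1 else 0) := by
    intro p
    by_cases hp : (p : ℕ) < m
    · simp only [hp, if_true]
      have hFτ : τ ≤ F p := hanti p ⟨m, hm⟩ (by simp [Fin.le_def]; omega)
      have h1 : C p ≤ 1 := hc1 (e p)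
      nlinarith
    · simp only [hp, if_false]
      have hτF : F p ≤ τ := hanti ⟨m, hm⟩ p (by simp [Fin.le_def]; omega)
      have h0 : 0 ≤ C p := hc0 (e p)
      nlinarith
  calc ∑ p, f p * c p = ∑ p, F p * C p := hL
    _ ≤ ∑ p : Fin N, ((if (p : ℕ) < m then F p else 0)
          + τ * (C p - if (p : ℕ) < m then 1 else 0)) :=
        Finset.sum_le_sum fun p _ => key p
    _ = (∑ p : Fin N, (if (p : ℕ) < m then F p else 0))
          + τ * ((∑ p, C p) - (m : ℝ)) := by
        rw [Finset.sum_add_distrib, ← Finset.mul_sum, Finset.sum_sub_distrib, hcard]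
    _ ≤ ∑ p : Fin N, (if (p : ℕ) < m then F p else 0) := by
        have : τ * ((∑ p, C p) - (m : ℝ)) ≤ 0 :=
          mul_nonpos_of_nonneg_of_nonpos hτ0 (by linarith)
        linarith
    _ = ∑ i ∈ Finset.range m, G i := hRHS.symm

lemma proj_bound {a b : Type*} [Fintype a] [Fintype b] [DecidableEq a] [DecidableEq b]
    (M : Matrix a b ℝ) (hM : M * Mᵀ = 1) (x : b → ℝ) :
    (M *ᵥ x) ⬝ᵥ (M *ᵥ x) ≤ x ⬝ᵥ x := by
  set P : Matrix b b ℝ := Mᵀ * M with hP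
  have hPsymm : Pᵀ = P := by rw [hP, Matrix.transpose_mul, Matrix.transpose_transpose]
  have hPP : P * P = P := by
    rw [hP, Matrix.mul_assoc, ← Matrix.mul_assoc M Mᵀ M, hM, Matrix.one_mul]
  have hdp : ∀ y : b → ℝ, (M *ᵥ y) ⬝ᵥ (M *ᵥ x) = y ⬝ᵥ (P *ᵥ x) := by
    intro y
    conv_rhs => rw [hP, ← Matrix.mulVec_mulVec, Matrix.dotProduct_mulVec,
      Matrix.vecMul_transpose]
  have hsym : ∀ y z : b → ℝ, (P *ᵥ y) ⬝ᵥ z = y ⬝ᵥ (P *ᵥ z) := by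
    intro y z
    conv_rhs => rw [Matrix.dotProduct_mulVec, ← hPsymm, Matrix.vecMul_transpose]
  set q : b → ℝ := P *ᵥ x with hq
  have h1 : (M *ᵥ x) ⬝ᵥ (M *ᵥ x) = x ⬝ᵥ q := hdp x
  have h2 : q ⬝ᵥ q = x ⬝ᵥ q := by
    calc q ⬝ᵥ q = x ⬝ᵥ (P *ᵥ q) := hsym x q
      _ = x ⬝ᵥ ((P * P) *ᵥ x) := by rw [hq, Matrix.mulVec_mulVec]
      _ = x ⬝ᵥ q := by rw [hPP, hq]
  have cs : (x ⬝ᵥ q) ^ 2 ≤ (x ⬝ᵥ x) * (q ⬝ᵥ q) := by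
    have := Finset.sum_mul_sq_le_sq_mul_sq Finset.univ x q
    simpa [dotProduct, sq] using this
  have h3 : 0 ≤ q ⬝ᵥ q := dp_self_nonneg q
  have h4 : 0 ≤ x ⬝ᵥ x := dp_self_nonneg x
  rw [h1]
  nlinarith [h2, cs, h3, h4]

/-- The singular values of a real matrix `X` (square roots of the eigenvalues of `XᴴX`),
arranged in decreasing order, as a function `ℕ → ℝ` which is `0` from the number of
columns onwards. -/
noncomputable def svals {I J : Type*} [Fintype I] [Fintype J] [DecidableEq J]
    (X : Matrix I J ℝ) : ℕ → ℝ := fun i =>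
  let f : Fin (Fintype.card J) → ℝ := fun j =>
    Real.sqrt ((show (Xᵀ * X).IsHermitian by
        simpa only [Matrix.conjTranspose_eq_transpose_of_trivial] using
          Matrix.isHermitian_conjTranspose_mul_self X).eigenvalues
      ((Fintype.equivFin J).symm j))
  if h : i < Fintype.card J then f (Tuple.sort f (Fin.rev ⟨i, h⟩)) else 0

lemma trace_le_kyfan {n : ℕ} (Y : Matrix (Fin (4*n)) (Fin (3*n)) ℝ)
    (L : Matrix (Fin (2*n)) (Fin (4*n)) ℝ) (R : Matrix (Fin (2*n)) (Fin (3*n)) ℝ)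
    (hL : L * Lᵀ = 1) (hR : R * Rᵀ = 1) :
    (L * Y * Rᵀ).trace ≤ ∑ i ∈ Finset.range (2*n), svals Y i := by
  rcases Nat.eq_zero_or_pos n with hn | hn
  · subst hn
    have h0 : (L * Y * Rᵀ).trace = 0 := by
      simp [Matrix.trace, Finset.univ_eq_empty]
    rw [h0]
    refine Finset.sum_nonneg fun i _ => ?_
    unfold svals
    dsimp only
    split
    · exact Real.sqrt_nonneg _
    · exact le_refl 0
  have hA : ((Yᴴ : Matrix (Fin (3*n)) (Fin (4*n)) ℝ) * Y).IsHermitian :=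
    Matrix.isHermitian_conjTranspose_mul_self Y
  set μ : Fin (3*n) → ℝ := hA.eigenvalues with hμdef
  have hμ0 : ∀ j, 0 ≤ μ j := fun j =>
    Matrix.eigenvalues_conjTranspose_mul_self_nonneg Y j
  set V : Matrix (Fin (3*n)) (Fin (3*n)) ℝ := hA.eigenvectorUnitary.val with hV
  set v : Fin (3*n) → (Fin (3*n) → ℝ) := fun j => ⇑(hA.eigenvectorBasis j) with hv
  have hVapp : ∀ a j, V a j = v j a := fun a j => rfl
  have h1 : star V * V = 1 := (Unitary.mem_iff.mp hA.eigenvectorUnitary.prop).1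
  have h2 : V * star V = 1 := (Unitary.mem_iff.mp hA.eigenvectorUnitary.prop).2
  have horthv : ∀ i j, v i ⬝ᵥ v j = if i = j then (1:ℝ) else 0 := by
    intro i j
    have e1 : (star V * V) i j = v i ⬝ᵥ v j := by
      simp [Matrix.mul_apply, Matrix.star_apply, dotProduct, hVapp]
    rw [← e1, h1, Matrix.one_apply]
  have hcomp : ∀ a b, ∑ j, v j a * v j b = (1 : Matrix (Fin (3*n)) (Fin (3*n)) ℝ) a b := by
    intro a b
    have e1 : (V * star V) a b = ∑ j, v j a * v j b := by
      simp [Matrix.mul_apply, Matrix.star_apply, hVapp]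
    rw [← e1, h2]
  set w : Fin (3*n) → (Fin (4*n) → ℝ) := fun j => Y *ᵥ v j with hw
  have hflipY : ∀ (y : Fin (3*n) → ℝ) (z : Fin (4*n) → ℝ),
      (Y *ᵥ y) ⬝ᵥ z = y ⬝ᵥ (Yᵀ *ᵥ z) := by
    intro y z
    conv_rhs => rw [Matrix.dotProduct_mulVec, Matrix.vecMul_transpose]
  have heig : ∀ j, Yᵀ *ᵥ (w j) = μ j • v j := by
    intro j
    have := hA.mulVec_eigenvectorBasis j
    rw [hw]
    rw [Matrix.mulVec_mulVec]
    rw [← Matrix.conjTranspose_eq_transpose_of_trivial]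
    exact this
  have horthw : ∀ i j, w i ⬝ᵥ w j = if i = j then μ j else 0 := by
    intro i j
    have e1 : w i ⬝ᵥ w j = v i ⬝ᵥ (Yᵀ *ᵥ w j) := hflipY (v i) (w j)
    rw [e1, heig j, dotProduct_smul, smul_eq_mul, horthv, mul_ite, mul_one, mul_zero]
  have htr : (L * Y * Rᵀ).trace = ∑ j, (R *ᵥ v j) ⬝ᵥ (L *ᵥ w j) := by
    have h0 : (L * Y * Rᵀ).trace = (Rᵀ * (L * Y)).trace := by
      rw [Matrix.trace_mul_cycle, Matrix.mul_assoc]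
    rw [h0, ← trace_eq_sum_quadform (Rᵀ * (L * Y)) v hcomp]
    refine Finset.sum_congr rfl fun j _ => ?_
    rw [← Matrix.mulVec_mulVec, Matrix.dotProduct_mulVec, Matrix.vecMul_transpose,
      ← Matrix.mulVec_mulVec]
  set av : Fin (3*n) → ℝ := fun j => (R *ᵥ v j) ⬝ᵥ (R *ᵥ v j) with hav
  set bv : Fin (3*n) → ℝ := fun j => ((L *ᵥ w j) ⬝ᵥ (L *ᵥ w j)) / μ j with hbv
  set cv : Fin (3*n) → ℝ := fun j => (av j + bv j) / 2 with hcv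
  have hvv : ∀ j, v j ⬝ᵥ v j = 1 := by intro j; rw [horthv]; simp
  have hww : ∀ j, w j ⬝ᵥ w j = μ j := by intro j; rw [horthw]; simp
  have ha0 : ∀ j, 0 ≤ av j := fun j => dp_self_nonneg _
  have ha1 : ∀ j, av j ≤ 1 := fun j => (proj_bound R hR (v j)).trans_eq (hvv j)
  have hzb : ∀ j, (L *ᵥ w j) ⬝ᵥ (L *ᵥ w j) ≤ μ j := fun j =>
    (proj_bound L hL (w j)).trans_eq (hww j)
  have hb0 : ∀ j, 0 ≤ bv j := fun j => div_nonneg (dp_self_nonneg _) (hμ0 j)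
  have hb1 : ∀ j, bv j ≤ 1 := by
    intro j
    rcases eq_or_lt_of_le (hμ0 j) with h | h
    · rw [hbv]; simp [← h]
    · rw [hbv]
      exact (div_le_one h).mpr (hzb j)
  have hc0 : ∀ j, 0 ≤ cv j := fun j => by rw [hcv]; dsimp only; linarith [ha0 j, hb0 j]
  have hc1 : ∀ j, cv j ≤ 1 := fun j => by rw [hcv]; dsimp only; linarith [ha1 j, hb1 j]
  -- per-term bound
  have hterm : ∀ j, (R *ᵥ v j) ⬝ᵥ (L *ᵥ w j) ≤ Real.sqrt (μ j) * cv j := by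
    intro j
    have cs : ((R *ᵥ v j) ⬝ᵥ (L *ᵥ w j)) ^ 2 ≤ av j * ((L *ᵥ w j) ⬝ᵥ (L *ᵥ w j)) := by
      have := Finset.sum_mul_sq_le_sq_mul_sq Finset.univ (R *ᵥ v j) (L *ᵥ w j)
      simpa [dotProduct, sq, hav] using this
    by_cases hj : μ j = 0
    · have hz0 : (L *ᵥ w j) ⬝ᵥ (L *ᵥ w j) = 0 := by
        refine le_antisymm ?_ (dp_self_nonneg _)
        rw [← hj]; exact hzb j
      have ht2 : ((R *ᵥ v j) ⬝ᵥ (L *ᵥ w j)) ^ 2 ≤ 0 := by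
        rw [hz0] at cs; simpa using cs
      have ht : (R *ᵥ v j) ⬝ᵥ (L *ᵥ w j) = 0 := by
        nlinarith [sq_nonneg ((R *ᵥ v j) ⬝ᵥ (L *ᵥ w j))]
      rw [ht]
      exact mul_nonneg (Real.sqrt_nonneg _) (hc0 j)
    · have hμpos : 0 < μ j := lt_of_le_of_ne (hμ0 j) (Ne.symm hj)
      have hzz : (L *ᵥ w j) ⬝ᵥ (L *ᵥ w j) = bv j * μ j := by
        rw [hbv]; field_simp
      have h1' : (R *ᵥ v j) ⬝ᵥ (L *ᵥ w j) ≤ Real.sqrt (av j * (bv j * μ j)) := by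
        calc (R *ᵥ v j) ⬝ᵥ (L *ᵥ w j) ≤ |(R *ᵥ v j) ⬝ᵥ (L *ᵥ w j)| := le_abs_self _
          _ = Real.sqrt (((R *ᵥ v j) ⬝ᵥ (L *ᵥ w j)) ^ 2) := (Real.sqrt_sq_eq_abs _).symm
          _ ≤ Real.sqrt (av j * (bv j * μ j)) := by
              apply Real.sqrt_le_sqrt
              rw [← hzz]; exact cs
      have h2' : Real.sqrt (av j * (bv j * μ j))
          = Real.sqrt (av j) * Real.sqrt (bv j) * Real.sqrt (μ j) := by
        rw [Real.sqrt_mul (ha0 j), Real.sqrt_mul (hb0 j), mul_assoc]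
      rw [h2'] at h1'
      have key2 : 2 * (Real.sqrt (av j) * Real.sqrt (bv j)) ≤ av j + bv j := by
        nlinarith [sq_nonneg (Real.sqrt (av j) - Real.sqrt (bv j)),
          Real.sq_sqrt (ha0 j), Real.sq_sqrt (hb0 j)]
      have hsμ : 0 ≤ Real.sqrt (μ j) := Real.sqrt_nonneg _
      rw [hcv]
      dsimp only
      nlinarith [mul_le_mul_of_nonneg_right key2 hsμ]
  -- sum of av
  have havsum : ∑ j, av j = ((2 * n : ℕ) : ℝ) := by
    have e1 : ∀ j, av j = v j ⬝ᵥ ((Rᵀ * R) *ᵥ v j) := by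
      intro j
      rw [hav]
      conv_rhs => rw [← Matrix.mulVec_mulVec, Matrix.dotProduct_mulVec,
        Matrix.vecMul_transpose]
    calc ∑ j, av j = ∑ j, v j ⬝ᵥ ((Rᵀ * R) *ᵥ v j) := Finset.sum_congr rfl fun j _ => e1 j
      _ = (Rᵀ * R).trace := trace_eq_sum_quadform _ v hcomp
      _ = (R * Rᵀ).trace := Matrix.trace_mul_comm _ _
      _ = ((2 * n : ℕ) : ℝ) := by rw [hR, Matrix.trace_one]; simp
  -- sum of bv
  have hbvsum : ∑ j, bv j ≤ ((2 * n : ℕ) : ℝ) := by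
    have e1 : ∀ j, bv j = ∑ r, ((L r) ⬝ᵥ w j) ^ 2 / μ j := by
      intro j
      rw [hbv]
      dsimp only
      rw [← Finset.sum_div]
      congr 1
      simp [dotProduct, Matrix.mulVec, sq]
    have e2 : ∀ r, (L r) ⬝ᵥ (L r) = (L * Lᵀ) r r := by
      intro r
      simp [Matrix.mul_apply, dotProduct, Matrix.transpose_apply]
    calc ∑ j, bv j = ∑ j, ∑ r, ((L r) ⬝ᵥ w j) ^ 2 / μ j :=
          Finset.sum_congr rfl fun j _ => e1 j
      _ = ∑ r, ∑ j, ((L r) ⬝ᵥ w j) ^ 2 / μ j := Finset.sum_comm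
      _ ≤ ∑ r, (L r) ⬝ᵥ (L r) :=
          Finset.sum_le_sum fun r _ => bessel_aux w μ horthw (L r)
      _ = ∑ r, (L * Lᵀ) r r := Finset.sum_congr rfl fun r _ => e2 r
      _ = (L * Lᵀ).trace := rfl
      _ = ((2 * n : ℕ) : ℝ) := by rw [hL, Matrix.trace_one]; simp
  have hcvsum : ∑ j, cv j ≤ ((2 * n : ℕ) : ℝ) := by
    have : ∑ j, cv j = ((∑ j, av j) + ∑ j, bv j) / 2 := by
      rw [hcv, ← Finset.sum_add_distrib, ← Finset.sum_div]
    rw [this, havsum]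
    linarith [hbvsum]
  -- final assembly
  set e : Fin (3*n) ≃ Fin (Fintype.card (Fin (3*n))) := Fintype.equivFin (Fin (3*n)) with he
  set F : Fin (Fintype.card (Fin (3*n))) → ℝ := fun p => Real.sqrt (μ (e.symm p)) with hF
  set C : Fin (Fintype.card (Fin (3*n))) → ℝ := fun p => cv (e.symm p) with hC
  have hNcard : 2 * n < Fintype.card (Fin (3*n)) := by
    rw [Fintype.card_fin]; omega
  have hCsum : ∑ p, C p ≤ ((2 * n : ℕ) : ℝ) := by
    rw [hC]
    rw [Equiv.sum_comp e.symm cv]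
    exact hcvsum
  have hmain := sum_mul_le_sorted_prefix hNcard F C
    (fun p => Real.sqrt_nonneg _) (fun p => hc0 _) (fun p => hc1 _) hCsum
  have hFC : ∑ j, Real.sqrt (μ j) * cv j = ∑ p, F p * C p := by
    rw [hF, hC]
    exact (Equiv.sum_comp e.symm (fun j => Real.sqrt (μ j) * cv j)).symm
  have hsv : ∀ i, (if h : i < Fintype.card (Fin (3*n)) then
      F (Tuple.sort F (Fin.rev ⟨i, h⟩)) else 0) = svals Y i := fun i => rfl
  calc (L * Y * Rᵀ).trace = ∑ j, (R *ᵥ v j) ⬝ᵥ (L *ᵥ w j) := htr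
    _ ≤ ∑ j, Real.sqrt (μ j) * cv j := Finset.sum_le_sum fun j _ => hterm j
    _ = ∑ p, F p * C p := hFC
    _ ≤ ∑ i ∈ Finset.range (2*n), (if h : i < Fintype.card (Fin (3*n)) then
          F (Tuple.sort F (Fin.rev ⟨i, h⟩)) else 0) := hmain
    _ = ∑ i ∈ Finset.range (2*n), svals Y i := Finset.sum_congr rfl fun i _ => hsv i

/-- Monotone convergence of the sequential convex procedure: if at each step `(L k, R k)`
are partial isometries built from the top-`2n` singular vectors of `Z k` (so that
`tr(L k · Z k · (R k)ᵀ)` attains the Ky Fan `2n`-norm of `Z k`), and `Z (k+1)` minimizes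
`φ(Y) = ‖Y‖_∗ − tr(L k · Y · (R k)ᵀ)` over the (nonempty convex) feasible set `S`, then
the truncated nuclear norms `α_k = Σ_{i>2n} σᵢ(Z k)` are monotonically non-increasing. -/
theorem stmt_14 {n : ℕ} (S : Set (Matrix (Fin (4 * n)) (Fin (3 * n)) ℝ))
    (hS : S.Nonempty) (hconv : Convex ℝ S)
    (Z : ℕ → Matrix (Fin (4 * n)) (Fin (3 * n)) ℝ)
    (L : ℕ → Matrix (Fin (2 * n)) (Fin (4 * n)) ℝ)
    (R : ℕ → Matrix (Fin (2 * n)) (Fin (3 * n)) ℝ)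
    (hfeas : ∀ k, Z k ∈ S)
    (hL : ∀ k, L k * (L k)ᵀ = 1) (hR : ∀ k, R k * (R k)ᵀ = 1)
    (htop : ∀ k, (L k * Z k * (R k)ᵀ).trace = ∑ i ∈ Finset.range (2 * n), svals (Z k) i)
    (hmin : ∀ k, ∀ Y ∈ S,
      (∑ i ∈ Finset.range (3 * n), svals (Z (k + 1)) i) - (L k * Z (k + 1) * (R k)ᵀ).trace ≤
        (∑ i ∈ Finset.range (3 * n), svals Y i) - (L k * Y * (R k)ᵀ).trace) :
    ∀ k, (∑ i ∈ Finset.Ico (2 * n) (3 * n), svals (Z (k + 1)) i) ≤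
      ∑ i ∈ Finset.Ico (2 * n) (3 * n), svals (Z k) i := by
  intro k
  have key := trace_le_kyfan (Z (k + 1)) (L k) (R k) (hL k) (hR k)
  have hmin' := hmin k (Z k) (hfeas k)
  have htop' := htop k
  rw [Finset.sum_Ico_eq_sub _ (by omega : 2 * n ≤ 3 * n),
    Finset.sum_Ico_eq_sub _ (by omega : 2 * n ≤ 3 * n)]
  linarith
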